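/- Let N be a bicombining network. Then N is galled if and only if N is reticulation-visible and every reticulation node of N is inner. -/

import Mathlib

/-!
Framework for rooted phylogenetic networks, formalized as directed graphs
given by an adjacency relation `A : V → V → Prop` on a vertex type `V`,
with a distinguished root `ρ`.  Leaves are identified with their (unique)
labels, i.e. the labelling is the identity on leaf vertices.
-/

namespace PhyloNet

variable {V : Type} {W : Type}

/-- Indegree of a vertex. -/
noncomputable def inDeg (A : V → V → Prop) (v : V) : ℕ := {u | A u v}.ncard

/-- Outdegree of a vertex. -/
noncomputable def outDeg (A : V → V → Prop) (v : V) : ℕ := {w | A v w}.ncard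

/-- `p` is a directed path (walk) from `u` to `v`, given as the list of its vertices. -/
def IsPath (A : V → V → Prop) (u v : V) (p : List V) : Prop :=
  p.Chain' A ∧ p.head? = some u ∧ p.getLast? = some v

/-- `A` with root `ρ` is a phylogenetic network: a finite rooted acyclic digraph whose
root has indegree 0 and outdegree ≥ 2, from which every node is reachable, and in which
every non-root node is either a leaf (indegree 1, outdegree 0), an internal tree node
(indegree 1, outdegree ≥ 2) or a reticulation (indegree ≥ 2, outdegree 1). -/
structure IsNetwork (A : V → V → Prop) (ρ : V) : Prop where
  finite : Finite V
  acyclic : ∀ v, ¬ Relation.TransGen A v v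
  root_indeg : inDeg A ρ = 0
  root_outdeg : 2 ≤ outDeg A ρ
  reach_from_root : ∀ v, Relation.ReflTransGen A ρ v
  degree_cond : ∀ v, v ≠ ρ →
    (inDeg A v = 1 ∧ (outDeg A v = 0 ∨ 2 ≤ outDeg A v)) ∨ (2 ≤ inDeg A v ∧ outDeg A v = 1)

/-- Reticulation node: indegree ≥ 2 and outdegree 1. -/
def IsRet (A : V → V → Prop) (v : V) : Prop := 2 ≤ inDeg A v ∧ outDeg A v = 1

/-- Leaf: indegree 1 and outdegree 0. -/
def IsLeaf (A : V → V → Prop) (v : V) : Prop := inDeg A v = 1 ∧ outDeg A v = 0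

/-- Tree node: any node that is not a reticulation node. -/
def IsTreeNode (A : V → V → Prop) (v : V) : Prop := ¬ IsRet A v

/-- `u` is visible on `v`: every directed path from the root `ρ` to `v` contains `u`. -/
def Visible (A : V → V → Prop) (ρ u v : V) : Prop := ∀ p, IsPath A ρ v p → u ∈ p

/-- A network is reticulation-visible if every reticulation node is visible on some leaf. -/
def RetVisible (A : V → V → Prop) (ρ : V) : Prop :=
  ∀ r, IsRet A r → ∃ ℓ, IsLeaf A ℓ ∧ Visible A ρ r ℓ

/-- Undirected adjacency in the subgraph `N − R(N)` induced on tree nodes. -/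
def TAdj (A : V → V → Prop) (u v : V) : Prop :=
  IsTreeNode A u ∧ IsTreeNode A v ∧ (A u v ∨ A v u)

/-- `S` is a tree node component: a connected component (ignoring directions) of the
subgraph induced on the tree nodes. -/
def IsTNC (A : V → V → Prop) (S : Set V) : Prop :=
  ∃ u, IsTreeNode A u ∧ S = {v | Relation.ReflTransGen (TAdj A) u v}

/-- `r` is the root of the tree node component `S`: it lies in `S` and has indegree 0
within `N − R(N)`, i.e. it has no tree-node parent. -/
def CompRoot (A : V → V → Prop) (S : Set V) (r : V) : Prop :=
  r ∈ S ∧ ∀ u, IsTreeNode A u → ¬ A u r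

/-- Tree node component `C'` is below tree node component `C''`. -/
def Below (A : V → V → Prop) (C' C'' : Set V) : Prop :=
  ∃ r, IsRet A r ∧ (∃ c, A r c ∧ CompRoot A C' c) ∧ (∃ p ∈ C'', A p r)

/-- A big tree node component: a tree node component with at least two nodes. -/
def BigTNC (A : V → V → Prop) (C : Set V) : Prop :=
  IsTNC A C ∧ ∃ a ∈ C, ∃ b ∈ C, a ≠ b

/-- A single-leaf component: its node set is `{ℓ}` for some leaf `ℓ`. -/
def SingleLeafTNC (A : V → V → Prop) (C : Set V) : Prop :=
  ∃ ℓ, IsLeaf A ℓ ∧ C = {ℓ}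

/-- A lowest big tree node component: a big tree node component `C` such that every
tree node component whose root is a proper descendant of the root of `C` is a
single-leaf component. -/
def LowestBig (A : V → V → Prop) (C : Set V) : Prop :=
  BigTNC A C ∧ ∀ C' r' rC, IsTNC A C' → CompRoot A C' r' → CompRoot A C rC →
    Relation.TransGen A rC r' → SingleLeafTNC A C'

/-- An inner reticulation: all of its parents lie in one and the same tree node component. -/
def InnerRet (A : V → V → Prop) (r : V) : Prop :=
  IsRet A r ∧ ∃ S, IsTNC A S ∧ ∀ p, A p r → p ∈ S

/-- `IR(C)`: reticulations all of whose parents lie in `C`. -/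
def IRset (A : V → V → Prop) (C : Set V) : Set V :=
  {r | IsRet A r ∧ ∀ p, A p r → p ∈ C}

/-- `CR(C)`: reticulations with at least one parent in `C` and at least one parent outside `C`. -/
def CRset (A : V → V → Prop) (C : Set V) : Set V :=
  {r | IsRet A r ∧ (∃ p, A p r ∧ p ∈ C) ∧ (∃ p, A p r ∧ p ∉ C)}

/-- `L_C`: the leaves of the network lying in `C` together with the children of the
inner reticulations below `C`. -/
def LCset (A : V → V → Prop) (C : Set V) : Set V :=
  {ℓ | ℓ ∈ C ∧ IsLeaf A ℓ} ∪ {x | ∃ r ∈ IRset A C, A r x}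

/-- Bicombining: every reticulation node has indegree exactly 2. -/
def Bicombining (A : V → V → Prop) : Prop := ∀ r, IsRet A r → inDeg A r = 2

/-- Galled: every reticulation node `r` has an ancestor `u` admitting two
internal-node-disjoint directed paths from `u` to `r` in which every node other
than `r` is a tree node. -/
def Galled (A : V → V → Prop) : Prop :=
  ∀ r, IsRet A r → ∃ u, Relation.TransGen A u r ∧ ∃ p₁ p₂ : List V,
    IsPath A u r p₁ ∧ IsPath A u r p₂ ∧ p₁ ≠ p₂ ∧
    (∀ x, x ∈ p₁ → x ∈ p₂ → x = u ∨ x = r) ∧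
    (∀ x ∈ p₁, x ≠ r → IsTreeNode A x) ∧ (∀ x ∈ p₂, x ≠ r → IsTreeNode A x)

/-- Restriction of a digraph to a vertex subset. -/
def Restrict (A : V → V → Prop) (S : Set V) : V → V → Prop :=
  fun a b => a ∈ S ∧ b ∈ S ∧ A a b

/-- Descendants of `u` (including `u`); the vertex set of the subnetwork `D_N(u)`. -/
def Desc (A : V → V → Prop) (u : V) : Set V := {v | Relation.ReflTransGen A u v}

/-- Binary network: the root has outdegree 2, leaves have degree 1, and every other
node has total degree 3. -/
def IsBinary (A : V → V → Prop) (ρ : V) : Prop :=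
  outDeg A ρ = 2 ∧ ∀ v, v ≠ ρ →
    (inDeg A v = 1 ∧ outDeg A v = 0) ∨ (inDeg A v = 1 ∧ outDeg A v = 2) ∨
    (inDeg A v = 2 ∧ outDeg A v = 1)

/-- A phylogenetic tree: a network with no reticulation nodes. -/
def IsPhyloTree (A : W → W → Prop) (ρ : W) : Prop :=
  IsNetwork A ρ ∧ ∀ w, ¬ IsRet A w

/-- A node with indegree 1 and outdegree 1 (a suppressible node). -/
def Deg11 (A : V → V → Prop) (v : V) : Prop := inDeg A v = 1 ∧ outDeg A v = 1

/-- There is a directed path from `a` to `b` (of length ≥ 1) all of whose internal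
nodes are suppressible. -/
def SubdivPath (A : V → V → Prop) (a b : V) : Prop :=
  ∃ p : List V, IsPath A a b p ∧ 2 ≤ p.length ∧ ∀ z ∈ p, z ≠ a → z ≠ b → Deg11 A z

/-- `φ` witnesses that the digraph `A'` on the vertex set `S` is a subdivision of the
tree `AT` restricted to the vertex set `SW`: `φ` injectively maps the tree nodes onto
the non-suppressible nodes, edges of the tree correspond exactly to directed paths
whose internal nodes are suppressible, and leaves are mapped according to the leaf
correspondence `θ` (same labels). -/
def SubdivWitness (A' : V → V → Prop) (S : Set V) (AT : W → W → Prop) (SW : Set W)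
    (θ : W → V) (φ : W → V) : Prop :=
  Set.InjOn φ SW ∧ (∀ w ∈ SW, φ w ∈ S) ∧
  (∀ x ∈ S, ¬ Deg11 (Restrict A' S) x → ∃ w ∈ SW, φ w = x) ∧
  (∀ x ∈ SW, ∀ y ∈ SW, (Restrict AT SW x y ↔ SubdivPath (Restrict A' S) (φ x) (φ y))) ∧
  (∀ w ∈ SW, outDeg (Restrict AT SW) w = 0 → φ w = θ w)

/-- The digraph `A'` on vertex set `S` is a subdivision of the tree `AT` on `SW`. -/
def IsSubdivisionOf (A' : V → V → Prop) (S : Set V) (AT : W → W → Prop) (SW : Set W)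
    (θ : W → V) : Prop :=
  ∃ φ, SubdivWitness A' S AT SW θ φ

/-- `E`, `D`, `φ` witness that the subnetwork of `A` on vertex set `S` displays the
subtree of `AT` on vertex set `SW`: `E` is a set of reticulation edges of the
subnetwork containing all but one of the incoming edges of each reticulation node of
the subnetwork, `D` is a set of deleted nodes, and `φ` witnesses that the result is a
subdivision of the subtree. -/
def DisplayWitness (A : V → V → Prop) (S : Set V) (AT : W → W → Prop) (SW : Set W)
    (θ : W → V) (E : Set (V × V)) (D : Set V) (φ : W → V) : Prop :=
  (∀ e ∈ E, Restrict A S e.1 e.2 ∧ 2 ≤ inDeg (Restrict A S) e.2) ∧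
  (∀ r ∈ S, 2 ≤ inDeg (Restrict A S) r →
     ∃ p, Restrict A S p r ∧ (p, r) ∉ E ∧ ∀ q, Restrict A S q r → q ≠ p → (q, r) ∈ E) ∧
  SubdivWitness (fun a b => Restrict A S a b ∧ (a, b) ∉ E) (S \ D) AT SW θ φ

/-- The subnetwork of `A` on vertex set `S` displays the subtree of `AT` on `SW`. -/
def DisplaysOn (A : V → V → Prop) (S : Set V) (AT : W → W → Prop) (SW : Set W)
    (θ : W → V) : Prop :=
  ∃ E D φ, DisplayWitness A S AT SW θ E D φ

/-- The leaves of the subnetwork of `A` induced on vertex set `S`. -/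
def SubLeaves (A : V → V → Prop) (S : Set V) : Set V :=
  {v | v ∈ S ∧ outDeg (Restrict A S) v = 0}

/-- `B` is a soft cluster in the subnetwork of `A` on vertex set `S`: `B` is the
cluster of some node of some phylogenetic tree displayed by that subnetwork. -/
def SoftClusterOn (A : V → V → Prop) (S : Set V) (B : Set V) : Prop :=
  ∃ (W : Type) (AT : W → W → Prop) (ρT : W) (θ : W → V),
    IsPhyloTree AT ρT ∧
    Set.BijOn θ {w | IsLeaf AT w} (SubLeaves A S) ∧
    DisplaysOn A S AT Set.univ θ ∧
    ∃ x : W, θ '' {w | IsLeaf AT w ∧ Relation.ReflTransGen AT x w} = B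

/-- `B` is a soft cluster of the node `u` of `N`: there are `E` and `D` as in the
definition of display such that `u` is a node of `(N − E) − D` and the set of leaves
of `N` below `u` in `(N − E) − D` equals `B`. -/
def SoftClusterAt (A : V → V → Prop) (u : V) (B : Set V) : Prop :=
  ∃ (E : Set (V × V)) (D : Set V),
    (∀ e ∈ E, A e.1 e.2 ∧ 2 ≤ inDeg A e.2) ∧
    (∀ r, 2 ≤ inDeg A r → ∃ p, A p r ∧ (p, r) ∉ E ∧ ∀ q, A q r → q ≠ p → (q, r) ∈ E) ∧
    (∃ (W : Type) (AT : W → W → Prop) (ρT : W) (θ : W → V),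
      IsPhyloTree AT ρT ∧ Set.BijOn θ {w | IsLeaf AT w} {v | IsLeaf A v} ∧
      IsSubdivisionOf (fun a b => A a b ∧ (a, b) ∉ E) (Set.univ \ D) AT Set.univ θ) ∧
    u ∉ D ∧
    {ℓ | IsLeaf A ℓ ∧
      Relation.ReflTransGen (fun a b => A a b ∧ (a, b) ∉ E ∧ a ∉ D ∧ b ∉ D) u ℓ} = B

/-- `w` is the lowest common ancestor of the set `X` in the (tree-like) digraph `A`. -/
def IsLCAIn (A : V → V → Prop) (X : Set V) (w : V) : Prop :=
  (∀ x ∈ X, Relation.ReflTransGen A w x) ∧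
  ∀ w', (∀ x ∈ X, Relation.ReflTransGen A w' x) → Relation.ReflTransGen A w' w

end PhyloNet

namespace PhyloNet

variable {V : Type}

section Aux

open Relation List

variable {A : V → V → Prop} {ρ : V} {R : V → V → Prop}

/-- Directed tree-node edges. -/
def TE (A : V → V → Prop) (a b : V) : Prop := IsTreeNode A a ∧ IsTreeNode A b ∧ A a b

lemma mem_of_getLast?_eq {l : List V} {a : V} (h : l.getLast? = some a) : a ∈ l :=
  List.mem_of_mem_getLast? (h ▸ rfl)

lemma mem_of_head?_eq {l : List V} {a : V} (h : l.head? = some a) : a ∈ l :=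
  List.mem_of_mem_head? (h ▸ rfl)

lemma isPath_ne_nil {u v : V} {p : List V} (h : IsPath R u v p) : p ≠ [] := by
  intro rfl'; subst rfl'; simp [IsPath] at h

lemma path_rtg {u v : V} {p : List V} (h : IsPath R u v p) : ReflTransGen R u v := by
  induction p generalizing u with
  | nil => simp [IsPath] at h
  | cons x t ih =>
    obtain ⟨hc, hh, hl⟩ := h
    have hx : x = u := by simpa using hh
    subst hx
    cases t with
    | nil =>
      have : v = x := by simpa using hl.symm
      subst this; exact ReflTransGen.refl
    | cons y t' =>
      have hxy : R x y := (List.isChain_cons_cons.mp hc).1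
      have hrest : IsPath R y v (y :: t') := by
        refine ⟨(List.isChain_cons_cons.mp hc).2, rfl, ?_⟩
        rw [List.getLast?_cons_cons] at hl; exact hl
      exact ReflTransGen.head hxy (ih hrest)

lemma rtg_path {u v : V} (h : ReflTransGen R u v) : ∃ p, IsPath R u v p := by
  induction h with
  | refl => exact ⟨[u], List.isChain_singleton u, rfl, rfl⟩
  | tail hab hbc ih =>
    obtain ⟨p, hc, hh, hl⟩ := ih
    refine ⟨p ++ [_], ?_, ?_, List.getLast?_concat⟩
    · refine List.isChain_append.mpr ⟨hc, List.isChain_singleton _, ?_⟩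
      intro x hx y hy
      simp only [List.head?_cons, Option.mem_def, Option.some_inj] at hy
      subst hy
      rw [hl] at hx
      simp only [Option.mem_def, Option.some_inj] at hx
      subst hx; exact hbc
    · rw [List.head?_append_of_ne_nil _ (isPath_ne_nil ⟨hc, hh, hl⟩)]; exact hh

lemma path_split {u v x : V} {p : List V} (h : IsPath R u v p) (hx : x ∈ p) :
    ∃ q t, p = q ++ x :: t ∧ IsPath R u x (q ++ [x]) ∧ IsPath R x v (x :: t) := by
  obtain ⟨q, t, rfl⟩ := List.append_of_mem hx
  obtain ⟨hc, hh, hl⟩ := h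
  have hc2 : ((q ++ [x]) ++ t).Chain' R := by simpa using hc
  obtain ⟨hc1, hct, hlink⟩ := List.isChain_append.mp hc2
  refine ⟨q, t, rfl, ⟨hc1, ?_, List.getLast?_concat⟩, ?_⟩
  · cases q with
    | nil => simp at hh ⊢; exact hh.symm ▸ rfl
    | cons a q' =>
      rw [List.head?_append_of_ne_nil _ (by simp)]
      simpa using hh
  · refine ⟨(List.isChain_append.mp (show List.IsChain R (q ++ x :: t) from hc)).2.1, rfl, ?_⟩
    rw [List.getLast?_append_cons] at hl; exact hl

lemma path_last_decomp {a b : V} {p : List V} (h : IsPath R a b p) (hne : b ≠ a) :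
    ∃ q u, IsPath R a u q ∧ R u b ∧ p = q ++ [b] := by
  have hp : p ≠ [] := isPath_ne_nil h
  obtain ⟨hc, hh, hl⟩ := h
  have hgl : p.getLast hp = b := by
    rw [List.getLast?_eq_getLast hp] at hl; exact (Option.some_inj.mp hl)
  have hdecomp : p = p.dropLast ++ [b] := by
    conv_lhs => rw [← List.dropLast_append_getLast hp]
    rw [hgl]
  set q := p.dropLast with hq
  have hqne : q ≠ [] := by
    intro h0
    rw [h0, List.nil_append] at hdecomp
    rw [hdecomp] at hh
    simp at hh
    exact hne hh
  have hc' := List.isChain_append.mp (hdecomp ▸ hc)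
  have hu : R (q.getLast hqne) b := by
    refine hc'.2.2 _ ?_ b rfl
    rw [List.getLast?_eq_getLast hqne]; rfl
  refine ⟨q, q.getLast hqne, ⟨hc'.1, ?_, List.getLast?_eq_getLast hqne⟩, hu, hdecomp⟩
  rw [hdecomp, List.head?_append_of_ne_nil _ hqne] at hh
  exact hh

lemma path_self {a : V} {q : List V} (hac : ∀ v, ¬ TransGen R v v)
    (h : IsPath R a a q) : q = [a] := by
  obtain ⟨hc, hh, hl⟩ := h
  cases q with
  | nil => simp at hh
  | cons x t =>
    have hx : x = a := by simpa using hh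
    subst hx
    cases t with
    | nil => rfl
    | cons y t' =>
      exfalso
      have hxy : R x y := (List.isChain_cons_cons.mp hc).1
      have hpt : IsPath R y x (y :: t') := by
        refine ⟨(List.isChain_cons_cons.mp hc).2, rfl, ?_⟩
        rw [List.getLast?_cons_cons] at hl; exact hl
      exact hac x (TransGen.head' hxy (path_rtg hpt))

lemma chain'_imp_mem {S : V → V → Prop} :
    ∀ {l : List V}, (∀ a ∈ l, ∀ b ∈ l, R a b → S a b) → l.Chain' R → l.Chain' S := by
  intro l
  induction l with
  | nil => intro _ _; exact List.isChain_nil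
  | cons x t ih =>
    intro himp hc
    cases t with
    | nil => exact List.isChain_singleton _
    | cons y t' =>
      simp only [List.Chain', List.isChain_cons_cons] at hc ⊢
      refine ⟨himp x (by simp) y (by simp) hc.1, ih ?_ hc.2⟩
      intro a ha b hb hr
      exact himp a (by simp [ha]) b (by simp [hb]) hr

lemma visible_self (v : V) : Visible A ρ v v := fun _ hp => mem_of_getLast?_eq hp.2.2

lemma visible_trans {a b v : V} (hab : Visible A ρ a b) (hbv : Visible A ρ b v) :
    Visible A ρ a v := by
  intro p hp
  have hbp : b ∈ p := hbv p hp
  obtain ⟨q, t, rfl, hq, _⟩ := path_split hp hbp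
  have := hab _ hq
  rcases List.mem_append.mp this with h | h
  · exact List.mem_append_left _ h
  · simp at h; subst h; simp

end Aux

section Net

open Relation List

variable {A : V → V → Prop} {ρ : V}

lemma parent_ne_root (hN : IsNetwork A ρ) {u v : V} (h : A u v) : v ≠ ρ := by
  haveI := hN.finite
  intro h'
  subst h'
  have he : ({w | A w v} : Set V) = ∅ := (Set.ncard_eq_zero (Set.toFinite _)).mp hN.root_indeg
  have : u ∈ ({w | A w v} : Set V) := h
  rw [he] at this
  exact this

lemma tree_parent_unique (hN : IsNetwork A ρ) {v u u' : V} (hv : IsTreeNode A v)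
    (h : A u v) (h' : A u' v) : u = u' := by
  haveI := hN.finite
  have hvρ : v ≠ ρ := parent_ne_root hN h
  have hdeg : inDeg A v = 1 := by
    rcases hN.degree_cond v hvρ with ⟨h1, _⟩ | h2
    · exact h1
    · exact absurd h2 hv
  obtain ⟨a, ha⟩ := Set.ncard_eq_one.mp hdeg
  have h1 : u ∈ ({w | A w v} : Set V) := h
  have h2 : u' ∈ ({w | A w v} : Set V) := h'
  rw [ha] at h1 h2
  simp at h1 h2
  rw [h1, h2]

lemma visible_parent_step (hN : IsNetwork A ρ) {a w : V} (hw : w ≠ ρ)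
    (h : ∀ q, A q w → Visible A ρ a q) : Visible A ρ a w := by
  intro p hp
  obtain ⟨q, u, hq, huw, rfl⟩ := path_last_decomp hp hw
  exact List.mem_append_left _ (h u huw q hq)

lemma wf_below (hN : IsNetwork A ρ) : WellFounded (fun a b : V => TransGen A b a) := by
  haveI := hN.finite
  haveI : IsTrans V (fun a b : V => TransGen A b a) := ⟨fun a b c hab hbc => hbc.trans hab⟩
  haveI : IsIrrefl V (fun a b : V => TransGen A b a) := ⟨fun a h => hN.acyclic a h⟩
  exact Finite.wellFounded_of_trans_of_irrefl _

lemma tadj_symm : Symmetric (TAdj A) := fun _ _ ⟨h1, h2, h3⟩ => ⟨h2, h1, h3.symm⟩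

lemma rtg_tadj_treeNode {u v : V} (hu : IsTreeNode A u)
    (h : ReflTransGen (TAdj A) u v) : IsTreeNode A v := by
  induction h with
  | refl => exact hu
  | tail _ hbc _ => exact hbc.2.1

lemma rtg_te_treeNode {u v : V} (hu : IsTreeNode A u)
    (h : ReflTransGen (TE A) u v) : IsTreeNode A v := by
  induction h with
  | refl => exact hu
  | tail _ hbc _ => exact hbc.2.1

lemma te_rtg_a {u v : V} (h : ReflTransGen (TE A) u v) : ReflTransGen A u v :=
  ReflTransGen.mono (r := TE A) (p := A) (fun _ _ hab => hab.2.2) _ _ h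

lemma te_rtg_tadj {u v : V} (h : ReflTransGen (TE A) u v) :
    ReflTransGen (TAdj A) u v :=
  ReflTransGen.mono (r := TE A) (p := TAdj A) (fun _ _ hab => ⟨hab.1, hab.2.1, Or.inl hab.2.2⟩) _ _ h

lemma class_eq {u u' x : V} (h : ReflTransGen (TAdj A) u x)
    (h' : ReflTransGen (TAdj A) u' x) :
    {v | ReflTransGen (TAdj A) u v} = {v | ReflTransGen (TAdj A) u' v} := by
  have hsym : ∀ {a b : V}, Relation.ReflTransGen (TAdj A) a b → Relation.ReflTransGen (TAdj A) b a := by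
    haveI : Std.Symm (TAdj A) := ⟨fun a b h => tadj_symm h⟩
    exact fun {a b} h => Std.Symm.symm a b h
  ext v
  constructor
  · intro hv; exact (h'.trans (hsym h)).trans hv
  · intro hv; exact (h.trans (hsym h')).trans hv

lemma comp_directed (hN : IsNetwork A ρ) {c v : V}
    (hcr : ∀ u, A u c → ¬ IsTreeNode A u)
    (h : Relation.ReflTransGen (TAdj A) c v) : Relation.ReflTransGen (TE A) c v := by
  induction h with
  | refl => exact ReflTransGen.refl
  | @tail v w hcv hvw ih =>
    rcases hvw.2.2 with hvw' | hwv
    · exact ih.tail ⟨hvw.1, hvw.2.1, hvw'⟩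
    · rcases ih.cases_tail with h' | ⟨y, hcy, hyv⟩
      · exact absurd hvw.2.1 (hcr w (h' ▸ hwv))
      · have hyw : y = w := tree_parent_unique hN hvw.1 hyv.2.2 hwv
        exact hyw ▸ hcy

lemma visible_descend (hN : IsNetwork A ρ) {a c v : V} (hvc : Visible A ρ a c)
    (h : Relation.ReflTransGen (TE A) c v) : Visible A ρ a v := by
  induction h with
  | refl => exact hvc
  | @tail v w hcv hvw ih =>
    refine visible_parent_step hN (parent_ne_root hN hvw.2.2) ?_
    intro q hq
    have : q = v := tree_parent_unique hN hvw.2.1 hq hvw.2.2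
    exact this ▸ ih

/-- Common `TE`-ancestor of two nodes in the same tree-node component. -/
lemma common_ancestor (hN : IsNetwork A ρ) {x y : V} (hx : IsTreeNode A x)
    (h : Relation.ReflTransGen (TAdj A) x y) :
    ∃ u, Relation.ReflTransGen (TE A) u x ∧ Relation.ReflTransGen (TE A) u y := by
  induction h with
  | refl => exact ⟨x, ReflTransGen.refl, ReflTransGen.refl⟩
  | @tail v w hxv hvw ih =>
    obtain ⟨u, hux, huv⟩ := ih
    rcases hvw.2.2 with hvw' | hwv
    · exact ⟨u, hux, huv.tail ⟨hvw.1, hvw.2.1, hvw'⟩⟩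
    · rcases huv.cases_tail with h' | ⟨y', huy, hyv⟩
      · subst h'
        exact ⟨w, (ReflTransGen.single ⟨hvw.2.1, hvw.1, hwv⟩).trans hux, ReflTransGen.refl⟩
      · have hyw : y' = w := tree_parent_unique hN hvw.1 hyv.2.2 hwv
        exact ⟨u, hux, hyw ▸ huy⟩

end Net

section Main

open Relation List

variable {A : V → V → Prop} {ρ : V}

lemma inner_retVisible (hN : IsNetwork A ρ)
    (hinner : ∀ r, IsRet A r → InnerRet A r) : RetVisible A ρ := by
  haveI := hN.finite
  intro r hr
  refine (wf_below hN).induction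
    (C := fun x => IsRet A x → ∃ ℓ, IsLeaf A ℓ ∧ Visible A ρ x ℓ) r ?_ hr
  clear hr r
  intro x IH hx
  -- the unique child c of x
  obtain ⟨c, hcset⟩ := Set.ncard_eq_one.mp hx.2
  have hxc : A x c := by
    have : c ∈ ({w | A x w} : Set V) := by rw [hcset]; rfl
    exact this
  have hcρ : c ≠ ρ := parent_ne_root hN hxc
  -- c is a tree node
  have hcT : IsTreeNode A c := by
    intro hcr
    obtain ⟨_, S, ⟨u0, hu0, hS⟩, hpar⟩ := hinner c hcr
    subst hS
    exact (rtg_tadj_treeNode hu0 (hpar x hxc)) hx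
  -- x is the unique parent of c
  have huniq : ∀ q, A q c → q = x := fun q hq => tree_parent_unique hN hcT hq hxc
  have hvc : Visible A ρ x c := by
    refine visible_parent_step hN hcρ ?_
    intro q hq
    rw [huniq q hq]
    exact visible_self x
  have hcr : ∀ u, A u c → ¬ IsTreeNode A u := by
    intro u hu hT
    exact hT (by rw [huniq u hu]; exact hx)
  by_cases hleaf : ∃ ℓ, Relation.ReflTransGen (TAdj A) c ℓ ∧ IsLeaf A ℓ
  · obtain ⟨ℓ, hcl, hℓ⟩ := hleaf
    exact ⟨ℓ, hℓ, visible_descend hN hvc (comp_directed hN hcr hcl)⟩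
  · push_neg at hleaf
    obtain ⟨m, hmC, hmin⟩ := (wf_below hN).has_min
      {v | Relation.ReflTransGen (TAdj A) c v} ⟨c, ReflTransGen.refl⟩
    have hmC' : Relation.ReflTransGen (TAdj A) c m := hmC
    have hmt : IsTreeNode A m := rtg_tadj_treeNode hcT hmC'
    have hchild : ∀ w, A m w → ¬ IsTreeNode A w := fun w hw hwT =>
      hmin w (hmC'.tail ⟨hmt, hwT, Or.inl hw⟩) (TransGen.single hw)
    -- m has a child
    have hod : outDeg A m ≠ 0 := by
      by_cases hmρ : m = ρ
      · subst hmρ; have := hN.root_outdeg; omega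
      · rcases hN.degree_cond m hmρ with ⟨h1, h2 | h2⟩ | h3
        · exact absurd ⟨h1, h2⟩ (hleaf m hmC')
        · omega
        · exact absurd h3 hmt
    obtain ⟨r₂, hr₂⟩ := Set.nonempty_of_ncard_ne_zero hod
    have hr₂' : A m r₂ := hr₂
    have hretr₂ : IsRet A r₂ := not_not.mp (hchild r₂ hr₂')
    obtain ⟨_, S, ⟨u0, hu0, hS⟩, hpar⟩ := hinner r₂ hretr₂
    subst hS
    have hclass := class_eq (hpar m hr₂') hmC'
    have hparC : ∀ q, A q r₂ → Relation.ReflTransGen (TAdj A) c q := by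
      intro q hq
      have : q ∈ {v | Relation.ReflTransGen (TAdj A) u0 v} := hpar q hq
      rw [hclass] at this
      exact this
    have hvr₂ : Visible A ρ x r₂ := by
      refine visible_parent_step hN (parent_ne_root hN hr₂') ?_
      intro q hq
      exact visible_descend hN hvc (comp_directed hN hcr (hparC q hq))
    have htrans : TransGen A x r₂ :=
      Relation.TransGen.tail'
        (ReflTransGen.head hxc (te_rtg_a (comp_directed hN hcr hmC'))) hr₂'
    obtain ⟨ℓ, hℓ, hv⟩ := IH r₂ htrans hretr₂
    exact ⟨ℓ, hℓ, visible_trans hvr₂ hv⟩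

end Main

section Main2

open Relation List

variable {A : V → V → Prop} {ρ : V}

lemma path_mono {R S : V → V → Prop} (h : ∀ a b, R a b → S a b) {u v : V} {p : List V}
    (hp : IsPath R u v p) : IsPath S u v p :=
  ⟨hp.1.imp h, hp.2.1, hp.2.2⟩

lemma path_extend {R : V → V → Prop} {m a r : V} {q : List V} (h : IsPath R m a q)
    (har : R a r) : IsPath R m r (q ++ [r]) := by
  refine ⟨?_, ?_, List.getLast?_concat⟩
  · refine List.isChain_append.mpr ⟨h.1, List.isChain_singleton _, ?_⟩
    intro x hx y hy
    rw [h.2.2] at hx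
    simp only [Option.mem_def, Option.some_inj] at hx
    simp only [List.head?_cons, Option.mem_def, Option.some_inj] at hy
    subst hx; subst hy; exact har
  · rw [List.head?_append_of_ne_nil _ (isPath_ne_nil h)]; exact h.2.1

lemma inner_galled (hN : IsNetwork A ρ) (hbi : Bicombining A)
    (hinner : ∀ r, IsRet A r → InnerRet A r) : Galled A := by
  haveI := hN.finite
  intro r hr
  obtain ⟨p1, p2, hp12, hparset⟩ := Set.ncard_eq_two.mp (hbi r hr)
  have hA1 : A p1 r := by
    have : p1 ∈ ({u | A u r} : Set V) := by rw [hparset]; simp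
    exact this
  have hA2 : A p2 r := by
    have : p2 ∈ ({u | A u r} : Set V) := by rw [hparset]; simp
    exact this
  obtain ⟨_, S, ⟨u0, hu0, hS⟩, hpar⟩ := hinner r hr
  subst hS
  have h1 : Relation.ReflTransGen (TAdj A) u0 p1 := hpar p1 hA1
  have h2 : Relation.ReflTransGen (TAdj A) u0 p2 := hpar p2 hA2
  have hp1t : IsTreeNode A p1 := rtg_tadj_treeNode hu0 h1
  have hsym : ∀ {a b : V}, Relation.ReflTransGen (TAdj A) a b → Relation.ReflTransGen (TAdj A) b a := by
    haveI : Std.Symm (TAdj A) := ⟨fun a b h => tadj_symm h⟩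
    exact fun {a b} h => Std.Symm.symm a b h
  have h12 : Relation.ReflTransGen (TAdj A) p1 p2 := (hsym h1).trans h2
  obtain ⟨u, hup1, hup2⟩ := common_ancestor hN hp1t h12
  obtain ⟨m, hmCA, hmin⟩ := (wf_below hN).has_min
    {z | Relation.ReflTransGen (TE A) z p1 ∧ Relation.ReflTransGen (TE A) z p2}
    ⟨u, hup1, hup2⟩
  obtain ⟨hm1, hm2⟩ := hmCA
  have hmt : IsTreeNode A m := by
    rcases hm1.cases_head with heq | ⟨c, hmc, _⟩
    · exact heq ▸ hp1t
    · exact hmc.1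
  obtain ⟨q1, hq1⟩ := rtg_path hm1
  obtain ⟨q2, hq2⟩ := rtg_path hm2
  have helts1 : ∀ z ∈ q1,
      Relation.ReflTransGen (TE A) m z ∧ Relation.ReflTransGen (TE A) z p1 := by
    intro z hz
    obtain ⟨s, t, _, hpre, hsuf⟩ := path_split hq1 hz
    exact ⟨path_rtg hpre, path_rtg hsuf⟩
  have helts2 : ∀ z ∈ q2,
      Relation.ReflTransGen (TE A) m z ∧ Relation.ReflTransGen (TE A) z p2 := by
    intro z hz
    obtain ⟨s, t, _, hpre, hsuf⟩ := path_split hq2 hz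
    exact ⟨path_rtg hpre, path_rtg hsuf⟩
  refine ⟨m, Relation.TransGen.tail' (te_rtg_a hm1) hA1, q1 ++ [r], q2 ++ [r],
    path_extend (path_mono (fun a b h => h.2.2) hq1) hA1,
    path_extend (path_mono (fun a b h => h.2.2) hq2) hA2, ?_, ?_, ?_, ?_⟩
  · intro h
    have hq12 : q1 = q2 := List.append_cancel_right h
    have : (some p1 : Option V) = some p2 := by
      rw [← hq1.2.2, ← hq2.2.2, hq12]
    exact hp12 (Option.some_inj.mp this)
  · intro z hz1 hz2
    rcases List.mem_append.mp hz1 with hz1' | hz1'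
    · rcases List.mem_append.mp hz2 with hz2' | hz2'
      · by_cases hzm : z = m
        · exact Or.inl hzm
        · exfalso
          obtain ⟨hmz, hzp1⟩ := helts1 z hz1'
          rcases Relation.reflTransGen_iff_eq_or_transGen.mp hmz with h' | h'
          · exact hzm h'
          · exact hmin z ⟨hzp1, (helts2 z hz2').2⟩ (TransGen.mono (r := TE A) (p := A) (fun a b hab => hab.2.2) _ _ h')
      · simp at hz2'; exact Or.inr hz2'
    · simp at hz1'; exact Or.inr hz1'
  · intro z hz hzr
    rcases List.mem_append.mp hz with hz' | hz'
    · exact rtg_te_treeNode hmt (helts1 z hz').1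
    · simp at hz'; exact absurd hz' hzr
  · intro z hz hzr
    rcases List.mem_append.mp hz with hz' | hz'
    · exact rtg_te_treeNode hmt (helts2 z hz').1
    · simp at hz'; exact absurd hz' hzr

lemma galled_inner (hN : IsNetwork A ρ) (hbi : Bicombining A)
    (hg : Galled A) : ∀ r, IsRet A r → InnerRet A r := by
  haveI := hN.finite
  intro r hr
  obtain ⟨u, hur, p₁, p₂, h1, h2, hne, hdisj, ht1, ht2⟩ := hg r hr
  have hru : r ≠ u := fun h => hN.acyclic r (h ▸ hur)
  obtain ⟨q1, x1, hq1, hx1r, hp1eq⟩ := path_last_decomp h1 hru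
  obtain ⟨q2, x2, hq2, hx2r, hp2eq⟩ := path_last_decomp h2 hru
  have hnotin : ∀ (q : List V) (x : V), IsPath A u x q → A x r → r ∉ q := by
    intro q x hq hxr hrq
    obtain ⟨s, t, _, hpre, hsuf⟩ := path_split hq hrq
    exact hN.acyclic r (Relation.TransGen.tail' (path_rtg hsuf) hxr)
  have helem1 : ∀ z ∈ q1, IsTreeNode A z := by
    intro z hz
    refine ht1 z (hp1eq ▸ List.mem_append_left _ hz) ?_
    intro h; exact hnotin q1 x1 hq1 hx1r (h ▸ hz)
  have helem2 : ∀ z ∈ q2, IsTreeNode A z := by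
    intro z hz
    refine ht2 z (hp2eq ▸ List.mem_append_left _ hz) ?_
    intro h; exact hnotin q2 x2 hq2 hx2r (h ▸ hz)
  have hx1q : x1 ∈ q1 := mem_of_getLast?_eq hq1.2.2
  have hx2q : x2 ∈ q2 := mem_of_getLast?_eq hq2.2.2
  have hx1t : IsTreeNode A x1 := helem1 x1 hx1q
  have hx12 : x1 ≠ x2 := by
    intro he
    have hm1 : x1 ∈ p₁ := hp1eq ▸ List.mem_append_left _ hx1q
    have hm2 : x1 ∈ p₂ := hp2eq ▸ List.mem_append_left _ (he ▸ hx2q)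
    rcases hdisj x1 hm1 hm2 with h' | h'
    · -- x1 = u : both paths are [u, r], contradiction
      have hq1u : q1 = [u] := path_self hN.acyclic (h' ▸ hq1)
      have hq2u : q2 = [u] := path_self hN.acyclic ((he ▸ h' : x2 = u) ▸ hq2)
      exact hne (by rw [hp1eq, hp2eq, hq1u, hq2u])
    · exact hx1t (h' ▸ hr)
  obtain ⟨a, b, hab, hset⟩ := Set.ncard_eq_two.mp (hbi r hr)
  have hmem : ∀ p : V, A p r → p = x1 ∨ p = x2 := by
    intro p hp
    have hx1m : x1 = a ∨ x1 = b := by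
      have : x1 ∈ ({u | A u r} : Set V) := hx1r
      rw [hset] at this; simpa using this
    have hx2m : x2 = a ∨ x2 = b := by
      have : x2 ∈ ({u | A u r} : Set V) := hx2r
      rw [hset] at this; simpa using this
    have hpm : p = a ∨ p = b := by
      have : p ∈ ({u | A u r} : Set V) := hp
      rw [hset] at this; simpa using this
    rcases hx1m with h1' | h1' <;> rcases hx2m with h2' | h2' <;>
      rcases hpm with h3' | h3' <;> simp_all
  -- x1 and x2 are in the same tree-node component
  have hch1 : IsPath (TAdj A) u x1 q1 := by
    refine ⟨chain'_imp_mem (fun a' ha' b' hb' hab' =>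
      ⟨helem1 a' ha', helem1 b' hb', Or.inl hab'⟩) hq1.1, hq1.2.1, hq1.2.2⟩
  have hch2 : IsPath (TAdj A) u x2 q2 := by
    refine ⟨chain'_imp_mem (fun a' ha' b' hb' hab' =>
      ⟨helem2 a' ha', helem2 b' hb', Or.inl hab'⟩) hq2.1, hq2.2.1, hq2.2.2⟩
  have hsym : ∀ {a b : V}, Relation.ReflTransGen (TAdj A) a b → Relation.ReflTransGen (TAdj A) b a := by
    haveI : Std.Symm (TAdj A) := ⟨fun a b h => tadj_symm h⟩
    exact fun {a b} h => Std.Symm.symm a b h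
  have h12 : Relation.ReflTransGen (TAdj A) x1 x2 :=
    (hsym (path_rtg hch1)).trans (path_rtg hch2)
  refine ⟨hr, {v | Relation.ReflTransGen (TAdj A) x1 v}, ⟨x1, hx1t, rfl⟩, ?_⟩
  intro p hp
  rcases hmem p hp with h' | h'
  · exact h' ▸ Relation.ReflTransGen.refl
  · exact h' ▸ h12

end Main2

/-- A bicombining network is galled if and only if it is reticulation-visible and every
reticulation node is inner. -/
theorem galled_iff_retVisible_and_inner {V : Type} (A : V → V → Prop) (ρ : V)
    (hN : IsNetwork A ρ) (hbi : Bicombining A) :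
    Galled A ↔ (RetVisible A ρ ∧ ∀ r, IsRet A r → InnerRet A r) := by
  constructor
  · intro hg
    exact ⟨inner_retVisible hN (galled_inner hN hbi hg), galled_inner hN hbi hg⟩
  · rintro ⟨-, hin⟩
    exact inner_galled hN hbi hin

end PhyloNet
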